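/- Every good subset A of the real line ℝ is strongly good: if for every B ⊆ ℝ, A ≤ B and B ≤ A imply A ≈ B, then every surjective isometry T : ℝ → ℝ with T(A) ⊆ A satisfies T(A) = A. -/
import Mathlib


open Set Function

/-- Geometric equality on the real line: some surjective isometry maps `S₁` onto `S₂`. -/
def GeomEqR (S₁ S₂ : Set ℝ) : Prop :=
  ∃ f : ℝ → ℝ, Isometry f ∧ Function.Surjective f ∧ f '' S₁ = S₂

/-- `S₁` is equal to or smaller than `S₂`: some surjective isometry maps `S₁` into `S₂`. -/
def GeomLeR (S₁ S₂ : Set ℝ) : Prop :=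
  ∃ f : ℝ → ℝ, Isometry f ∧ Function.Surjective f ∧ f '' S₁ ⊆ S₂

/-- A figure is good if `A ≤ B` and `B ≤ A` imply `A ≈ B` for every figure `B`. -/
def IsGoodR (A : Set ℝ) : Prop :=
  ∀ B : Set ℝ, GeomLeR A B → GeomLeR B A → GeomEqR A B

/-- Every isometry of ℝ is a translation or a reflection. -/
lemma isometry_real_cases (f : ℝ → ℝ) (hf : Isometry f) :
    (∀ x, f x = x + f 0) ∨ (∀ x, f x = f 0 - x) := by
  have key : ∀ x y : ℝ, |f x - f y| = |x - y| := by
    intro x y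
    have := hf.dist_eq x y
    simpa [Real.dist_eq] using this
  have habs : ∀ x : ℝ, |f x - f 0| = |x| := by
    intro x; simpa using key x 0
  have hsq : ∀ x : ℝ, (f x - f 0) ^ 2 = x ^ 2 := by
    intro x
    rw [← sq_abs (f x - f 0), ← sq_abs x, habs x]
  have hmul : ∀ x y : ℝ, (f x - f 0) * (f y - f 0) = x * y := by
    intro x y
    have h1 : (f x - f y) ^ 2 = (x - y) ^ 2 := by
      rw [← sq_abs (f x - f y), ← sq_abs (x - y), key x y]
    have h2 := hsq x
    have h3 := hsq y
    nlinarith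
  have h1 : f 1 - f 0 = 1 ∨ f 1 - f 0 = -1 := by
    have := habs 1
    rcases abs_eq (by norm_num : (0:ℝ) ≤ 1) |>.mp (by simpa using this) with h | h
    · exact Or.inl h
    · exact Or.inr h
  rcases h1 with h | h
  · left
    intro x
    have := hmul x 1
    rw [h] at this
    linarith [this]
  · right
    intro x
    have := hmul x 1
    rw [h] at this
    linarith [this]

/-- An involutive isometric self-map shrinking `A` must fix `A`. -/
lemma involutive_image_eq {g : ℝ → ℝ} (hinv : ∀ x, g (g x) = x)
    {A B : Set ℝ} (hB : B ⊆ A) (hgA : g '' A = B) : A = B := by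
  refine le_antisymm ?_ hB
  intro x hx
  have : g x ∈ g '' A := ⟨x, hx, rfl⟩
  rw [hgA] at this
  have : g (g x) ∈ g '' A := ⟨g x, hB this, rfl⟩
  rw [hinv x] at this
  rwa [hgA] at this

/-- Appendix proposition: every good subset of the real line is strongly good. -/
theorem stronglyGood_of_good (A : Set ℝ) (hA : IsGoodR A) :
    ∀ T : ℝ → ℝ, Isometry T → Function.Surjective T → T '' A ⊆ A → T '' A = A := by
  intro T hT hTs hTA
  rcases isometry_real_cases T hT with hTt | hTr
  case inr =>
    -- reflection: involutive, so image equals A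
    have hinv : ∀ x, T (T x) = x := by
      intro x; rw [hTr (T x), hTr x]; ring
    exact le_antisymm hTA (by
      intro x hx
      have hTx : T x ∈ T '' A := ⟨x, hx, rfl⟩
      have : T (T x) ∈ T '' A := ⟨T x, hTA hTx, rfl⟩
      rwa [hinv x] at this)
  case inl =>
    by_contra hne
    obtain ⟨a, haA, haT⟩ : ∃ a, a ∈ A ∧ a ∉ T '' A := by
      by_contra h
      push_neg at h
      exact hne (le_antisymm hTA h)
    -- Step 1: apply goodness to B = A \ {a}
    have hle1 : GeomLeR A (A \ {a}) := by
      refine ⟨T, hT, hTs, ?_⟩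
      intro y hy
      exact ⟨hTA hy, fun h => haT (by rwa [Set.mem_singleton_iff.mp h] at hy)⟩
    have hle1' : GeomLeR (A \ {a}) A :=
      ⟨id, isometry_id, surjective_id, by simp⟩
    obtain ⟨g, hg, hgs, hgA⟩ := hA (A \ {a}) hle1 hle1'
    rcases isometry_real_cases g hg with hgt | hgr
    case inr =>
      have hinv : ∀ x, g (g x) = x := by
        intro x; rw [hgr (g x), hgr x]; ring
      have := involutive_image_eq hinv Set.diff_subset hgA
      exact (this ▸ haA).2 rfl
    case inl =>
      set d := g 0 with hd
      -- A + d = A \ {a}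
      have mem1 : ∀ x ∈ A, x + d ∈ A ∧ x + d ≠ a := by
        intro x hx
        have : g x ∈ A \ {a} := hgA ▸ ⟨x, hx, rfl⟩
        rw [hgt x] at this
        exact ⟨this.1, this.2⟩
      have hadA : a + d ∈ A := (mem1 a haA).1
      have hadne : a + d ≠ a := (mem1 a haA).2
      -- Step 2: apply goodness to B₂ = A \ {a + d}
      have hle2 : GeomLeR A (A \ {a + d}) := by
        refine ⟨g ∘ g, hg.comp hg, hgs.comp hgs, ?_⟩
        rw [Set.image_comp, hgA]
        rintro y ⟨x, ⟨hxA, hxa⟩, rfl⟩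
        rw [hgt x]
        refine ⟨(mem1 x hxA).1, ?_⟩
        intro h
        exact hxa (Set.mem_singleton_iff.mpr (by
          have : x + d = a + d := h
          linarith))
      have hle2' : GeomLeR (A \ {a + d}) A :=
        ⟨id, isometry_id, surjective_id, by simp⟩
      obtain ⟨h, hh, hhs, hhA⟩ := hA (A \ {a + d}) hle2 hle2'
      rcases isometry_real_cases h hh with hht | hhr
      case inr =>
        have hinv : ∀ x, h (h x) = x := by
          intro x; rw [hhr (h x), hhr x]; ring
        have := involutive_image_eq hinv Set.diff_subset hhA
        exact (this ▸ hadA).2 rfl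
      case inl =>
        set e := h 0 with he
        have mem2 : ∀ x ∈ A, x + e ∈ A ∧ x + e ≠ a + d := by
          intro x hx
          have : h x ∈ A \ {a + d} := hhA ▸ ⟨x, hx, rfl⟩
          rw [hht x] at this
          exact ⟨this.1, this.2⟩
        -- a ∈ A \ {a+d} = A + e, so a - e ∈ A; then a - e + d ∈ A, so a + d - e ∈ A,
        -- i.e. a + d ∈ A + e = A \ {a+d}, contradiction.
        have haAe : a ∈ h '' A := by
          rw [hhA]
          exact ⟨haA, fun hc => hadne (Set.mem_singleton_iff.mp hc).symm⟩
        obtain ⟨x, hxA, hxe⟩ := haAe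
        rw [hht x] at hxe
        -- x + e = a, x ∈ A
        have hxd : x + d ∈ A := (mem1 x hxA).1
        have := mem2 (x + d) hxd
        exact this.2 (by linarith)
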